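/- Let q ≥ 2 be an integer and let Π be a finite projective plane of order q. Then there exists a saturating set S of points of Π with |S| ≤ 2·√((q+1)·ln(q+1)) + 2. -/

import Mathlib

/-- A point set `S` in a projective plane (with line type `L`) is *saturating* if every point
not in `S` is collinear with two distinct points of `S`. -/
def IsSaturating (L : Type*) {P : Type*} [Membership P L] (S : Set P) : Prop :=
  ∀ Q : P, Q ∉ S → ∃ P₁ ∈ S, ∃ P₂ ∈ S, P₁ ≠ P₂ ∧ ∃ ℓ : L, Q ∈ ℓ ∧ P₁ ∈ ℓ ∧ P₂ ∈ ℓ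

namespace SatAux

open Finset Configuration Configuration.ProjectivePlane

attribute [local instance] Classical.propDecidable

variable {P L : Type*} [Fintype P] [Fintype L] [Membership P L]
  [Configuration.ProjectivePlane P L]

variable (L)

/-- covering predicate -/
def covers (S : Finset P) (Q : P) : Prop :=
  ∃ P₁ ∈ S, ∃ P₂ ∈ S, P₁ ≠ P₂ ∧ ∃ ℓ : L, Q ∈ ℓ ∧ P₁ ∈ ℓ ∧ P₂ ∈ ℓ

/-- uncovered points -/
noncomputable def unc (S : Finset P) : Finset P :=
  Finset.univ.filter fun Q => Q ∉ S ∧ ¬ covers L S Q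

lemma mem_unc {S : Finset P} {Q : P} : Q ∈ unc L S ↔ Q ∉ S ∧ ¬ covers L S Q := by
  simp [unc]

lemma covers_mono {S T : Finset P} (h : S ⊆ T) {Q : P} (hc : covers L S Q) : covers L T Q := by
  obtain ⟨a, ha, b, hb, hab, ℓ, h1, h2, h3⟩ := hc
  exact ⟨a, h ha, b, h hb, hab, ℓ, h1, h2, h3⟩

lemma saturating_of_unc_empty {S : Finset P} (h : unc L S = ∅) :
    IsSaturating L (↑S : Set P) := by
  intro Q hQ
  have : Q ∉ unc L S := h ▸ Finset.notMem_empty Q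
  rw [mem_unc] at this
  push_neg at this
  obtain ⟨a, ha, b, hb, hab, ℓ, h1, h2, h3⟩ := this (by simpa using hQ)
  exact ⟨a, ha, b, hb, hab, ℓ, h1, h2, h3⟩

variable {L}

/-- the set of points on a line, as a `Finset`. -/
noncomputable def pts (ℓ : L) : Finset P := Finset.univ.filter (· ∈ ℓ)

lemma mem_pts {ℓ : L} {p : P} : p ∈ (pts ℓ : Finset P) ↔ p ∈ ℓ := by simp [pts]

lemma card_pts (q : ℕ) (horder : order P L = q) (ℓ : L) : (pts ℓ : Finset P).card = q + 1 := by
  have h1 : (pts ℓ : Finset P).card = Fintype.card {p : P // p ∈ ℓ} :=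
    (Fintype.card_subtype _).symm
  rw [h1, ← Nat.card_eq_fintype_card]
  have := pointCount_eq P ℓ
  rw [horder] at this
  exact this

lemma nonemptyL (P' : Type*) (L' : Type*) [Fintype P'] [Fintype L'] [Membership P' L']
    [Configuration.ProjectivePlane P' L'] : Nonempty L' := by
  have h : 0 < Fintype.card L' := by
    rw [Configuration.ProjectivePlane.card_lines P' L']
    positivity
  exact Fintype.card_pos_iff.mp h

/-- line through two points. -/
noncomputable def lineThrough (u s : P) : L :=
  letI : Nonempty L := nonemptyL P L
  if h : u ≠ s then Configuration.HasLines.mkLine h else Classical.arbitrary L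

lemma lineThrough_mem₁ {u s : P} (h : u ≠ s) : u ∈ (lineThrough u s : L) := by
  rw [lineThrough, dif_pos h]
  exact (Configuration.HasLines.mkLine_ax h).1

lemma lineThrough_mem₂ {u s : P} (h : u ≠ s) : s ∈ (lineThrough u s : L) := by
  rw [lineThrough, dif_pos h]
  exact (Configuration.HasLines.mkLine_ax h).2

variable (L)

/-- `p` helps `u`: adding `p` to `S` covers `u`. -/
def helps (S : Finset P) (u p : P) : Prop :=
  p ∉ S ∧ ∃ s ∈ S, ∃ ℓ : L, u ∈ ℓ ∧ s ∈ ℓ ∧ p ∈ ℓ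

lemma step (q : ℕ) (horder : order P L = q) (S : Finset P) (hS : 1 ≤ S.card)
    (hU : (unc L S).Nonempty) :
    ∃ p ∉ S, ∃ c : ℕ, 0 < c ∧
      (unc L (insert p S)).card + c ≤ (unc L S).card ∧
      (unc L S).card * (S.card * (q - 1)) ≤ c * Fintype.card P := by
  classical
  have hq : 2 ≤ q := by
    have := one_lt_order P L
    omega
  -- Claim A
  have claimA : ∀ u ∈ unc L S, S.card * (q - 1) ≤ (univ.filter fun p => helps L S u p).card := by
    intro u hu
    obtain ⟨huS, hucov⟩ := (mem_unc L).mp hu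
    have hus : ∀ s ∈ S, u ≠ s := fun s hs h => huS (h ▸ hs)
    set D : P → Finset P := fun s => (pts ((lineThrough u s : L)) : Finset P) \ {u, s} with hD
    have hsub : S.biUnion D ⊆ univ.filter fun p => helps L S u p := by
      intro p hp
      obtain ⟨s, hs, hpD⟩ := Finset.mem_biUnion.mp hp
      rw [hD] at hpD
      obtain ⟨hpl, hpus⟩ := Finset.mem_sdiff.mp hpD
      rw [mem_pts] at hpl
      simp only [Finset.mem_insert, Finset.mem_singleton] at hpus
      push_neg at hpus
      have hpnS : p ∉ S := by
        intro hpS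
        exact hucov ⟨s, hs, p, hpS, fun h => hpus.2 h.symm, lineThrough u s,
          lineThrough_mem₁ (hus s hs), lineThrough_mem₂ (hus s hs), hpl⟩
      exact Finset.mem_filter.mpr ⟨Finset.mem_univ p,
        hpnS, s, hs, lineThrough u s, lineThrough_mem₁ (hus s hs),
        lineThrough_mem₂ (hus s hs), hpl⟩
    have hdisj : ∀ s ∈ S, ∀ s' ∈ S, s ≠ s' → Disjoint (D s) (D s') := by
      intro s hs s' hs' hss
      rw [Finset.disjoint_left]
      intro p hp hp'
      rw [hD] at hp hp'
      obtain ⟨hpl, hpus⟩ := Finset.mem_sdiff.mp hp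
      obtain ⟨hpl', hpus'⟩ := Finset.mem_sdiff.mp hp'
      rw [mem_pts] at hpl hpl'
      simp only [Finset.mem_insert, Finset.mem_singleton] at hpus hpus'
      push_neg at hpus hpus'
      have heq := Configuration.Nondegenerate.eq_or_eq (P := P) (L := L)
        hpl (lineThrough_mem₁ (hus s hs)) hpl' (lineThrough_mem₁ (hus s' hs'))
      rcases heq with h | h
      · exact hpus.1 h
      · apply hucov
        exact ⟨s, hs, s', hs', hss, lineThrough u s, lineThrough_mem₁ (hus s hs),
          lineThrough_mem₂ (hus s hs), h ▸ lineThrough_mem₂ (hus s' hs')⟩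
    have hcard : (S.biUnion D).card = S.card * (q - 1) := by
      rw [Finset.card_biUnion hdisj]
      have : ∀ s ∈ S, (D s).card = q - 1 := by
        intro s hs
        rw [hD]
        have hsubs : ({u, s} : Finset P) ⊆ pts ((lineThrough u s : L)) := by
          intro x hx
          simp only [Finset.mem_insert, Finset.mem_singleton] at hx
          rcases hx with rfl | h2
          · exact mem_pts.mpr (lineThrough_mem₁ (hus s hs))
          · rw [h2]
            exact mem_pts.mpr (lineThrough_mem₂ (hus s hs))
        rw [Finset.card_sdiff_of_subset hsubs, card_pts q horder,
          Finset.card_insert_of_notMem (by simpa using hus s hs), Finset.card_singleton]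
        omega
      rw [Finset.sum_congr rfl this, Finset.sum_const, smul_eq_mul]
    calc S.card * (q - 1) = (S.biUnion D).card := hcard.symm
      _ ≤ _ := Finset.card_le_card hsub
  -- double counting
  set g : P → ℕ := fun p => ((unc L S).filter fun u => helps L S u p).card with hg
  have claimB : (unc L S).card * (S.card * (q - 1)) ≤ ∑ p : P, g p := by
    have hswap : ∑ p : P, g p = ∑ u ∈ unc L S, (univ.filter fun p => helps L S u p).card := by
      simp only [hg, Finset.card_filter]
      exact Finset.sum_comm
    rw [hswap]
    calc (unc L S).card * (S.card * (q - 1))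
        = ∑ _u ∈ unc L S, S.card * (q - 1) := by rw [Finset.sum_const, smul_eq_mul]
      _ ≤ _ := Finset.sum_le_sum claimA
  obtain ⟨p₀, -, hp₀⟩ := Finset.exists_max_image univ g ⟨hU.choose, Finset.mem_univ _⟩
  have hsum_le : ∑ p : P, g p ≤ Fintype.card P * g p₀ := by
    calc ∑ p : P, g p ≤ (univ : Finset P).card • g p₀ :=
          Finset.sum_le_card_nsmul _ _ _ fun x _ => hp₀ x (Finset.mem_univ x)
      _ = Fintype.card P * g p₀ := by rw [smul_eq_mul, Finset.card_univ]
  have hmain : (unc L S).card * (S.card * (q - 1)) ≤ g p₀ * Fintype.card P := by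
    calc (unc L S).card * (S.card * (q - 1)) ≤ ∑ p : P, g p := claimB
      _ ≤ Fintype.card P * g p₀ := hsum_le
      _ = g p₀ * Fintype.card P := mul_comm _ _
  have hcpos : 0 < g p₀ := by
    rcases Nat.eq_zero_or_pos (g p₀) with h | h
    · exfalso
      rw [h, zero_mul] at hmain
      have h1 : 0 < (unc L S).card := Finset.card_pos.mpr hU
      have h2 : 0 < q - 1 := by omega
      have h3 : 0 < S.card := by omega
      have := Nat.mul_pos h1 (Nat.mul_pos h3 h2)
      omega
    · exact h
  have hp₀S : p₀ ∉ S := by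
    have : ((unc L S).filter fun u => helps L S u p₀).Nonempty := Finset.card_pos.mp hcpos
    obtain ⟨u, hu⟩ := this
    exact ((Finset.mem_filter.mp hu).2).1
  refine ⟨p₀, hp₀S, g p₀, hcpos, ?_, hmain⟩
  -- Claim C
  have hsubC : unc L (insert p₀ S) ⊆ (unc L S) \ ((unc L S).filter fun u => helps L S u p₀) := by
    intro u hu
    obtain ⟨huS, hucov⟩ := (mem_unc L).mp hu
    have huS' : u ∉ S := fun h => huS (Finset.mem_insert_of_mem h)
    have hucov' : ¬ covers L S u := fun h =>
      hucov (covers_mono L (Finset.subset_insert _ _) h)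
    have huU : u ∈ unc L S := (mem_unc L).mpr ⟨huS', hucov'⟩
    rw [Finset.mem_sdiff]
    refine ⟨huU, ?_⟩
    rw [Finset.mem_filter]
    rintro ⟨-, hpn, s, hs, ℓ, h1, h2, h3⟩
    exact hucov ⟨s, Finset.mem_insert_of_mem hs, p₀, Finset.mem_insert_self _ _,
      fun h => hpn (h ▸ hs), ℓ, h1, h2, h3⟩
  have hfil_sub : ((unc L S).filter fun u => helps L S u p₀) ⊆ unc L S := Finset.filter_subset _ _
  have := Finset.card_le_card hsubC
  rw [Finset.card_sdiff_of_subset hfil_sub] at this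
  have hle2 : ((unc L S).filter fun u => helps L S u p₀).card ≤ (unc L S).card :=
    Finset.card_le_card hfil_sub
  have hgp : ((unc L S).filter fun u => helps L S u p₀).card = g p₀ := rfl
  omega

end SatAux

namespace SatAux2
open Finset Configuration Configuration.ProjectivePlane SatAux

attribute [local instance] Classical.propDecidable

variable {P L : Type*} [Fintype P] [Fintype L] [Membership P L]
  [Configuration.ProjectivePlane P L]

variable (P L)

lemma greedy (q : ℕ) (horder : order P L = q) (j : ℕ) :
    ∃ S : Finset P, 2 ≤ S.card ∧ S.card ≤ 2 + j ∧
      (unc L S = ∅ ∨ (S.card = 2 + j ∧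
        ((unc L S).card : ℝ) ≤ (q : ℝ)^2 *
          ∏ k ∈ Finset.range j,
            (1 - (2 + (k : ℝ)) * ((q : ℝ) - 1) / ((q : ℝ)^2 + (q : ℝ) + 1)))) := by
  have hq : 2 ≤ q := by have := one_lt_order P L; omega
  have hcardP : Fintype.card P = q ^ 2 + q + 1 := by
    rw [card_points P L, horder]
  induction j with
  | zero =>
    obtain ⟨a, b, hab⟩ := Fintype.exists_pair_of_one_lt_card
      (α := P) (by rw [hcardP]; nlinarith)
    refine ⟨{a, b}, ?_, ?_, Or.inr ⟨Finset.card_pair hab, ?_⟩⟩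
    · rw [Finset.card_pair hab]
    · rw [Finset.card_pair hab]
    have hsub : unc L ({a, b} : Finset P) ⊆ univ \ pts ((HasLines.mkLine hab : L)) := by
      intro u hu
      obtain ⟨huS, hucov⟩ := (mem_unc L).mp hu
      rw [Finset.mem_sdiff, mem_pts]
      refine ⟨Finset.mem_univ u, fun hul => ?_⟩
      exact hucov ⟨a, by simp, b, by simp, hab, HasLines.mkLine hab, hul,
        (HasLines.mkLine_ax hab).1, (HasLines.mkLine_ax hab).2⟩
    have hcard : (unc L ({a, b} : Finset P)).card ≤ q ^ 2 := by
      calc (unc L ({a, b} : Finset P)).card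
          ≤ (univ \ pts ((HasLines.mkLine hab : L))).card := Finset.card_le_card hsub
        _ = Fintype.card P - (q + 1) := by
            rw [Finset.card_sdiff_of_subset (Finset.subset_univ _), Finset.card_univ,
              card_pts q horder]
        _ = q ^ 2 := by omega
    simp only [Finset.range_zero, Finset.prod_empty, mul_one]
    exact_mod_cast hcard
  | succ j ih =>
    obtain ⟨S, h2, hle, hbr⟩ := ih
    by_cases hU : unc L S = ∅
    · exact ⟨S, h2, by omega, Or.inl hU⟩
    rcases hbr with h | ⟨hcard, hbound⟩
    · exact absurd h hU
    have hUne : (unc L S).Nonempty := Finset.nonempty_iff_ne_empty.mpr hU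
    obtain ⟨p, hp, c, hcpos, hstep1, hstep2⟩ := step L q horder S (by omega) hUne
    refine ⟨insert p S, ?_, ?_, Or.inr ⟨?_, ?_⟩⟩
    · rw [Finset.card_insert_of_notMem hp]; omega
    · rw [Finset.card_insert_of_notMem hp]; omega
    · rw [Finset.card_insert_of_notMem hp]; omega
    -- the real bound
    have hN : (0 : ℝ) < (q : ℝ)^2 + (q : ℝ) + 1 := by positivity
    set N : ℝ := (q : ℝ)^2 + (q : ℝ) + 1 with hNdef
    have hcast : (Fintype.card P : ℝ) = N := by rw [hcardP]; push_cast; ring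
    have hUpos : 0 < (unc L S).card := Finset.card_pos.mpr hUne
    have hcleU : c ≤ (unc L S).card := by omega
    -- real versions
    have hr2 : ((unc L S).card : ℝ) * ((2 + (j:ℝ)) * ((q:ℝ) - 1)) ≤ (c : ℝ) * N := by
      have := hstep2
      rw [hcard] at this
      have hcast2 : ((unc L S).card * ((2 + j) * (q - 1)) : ℕ) ≤ (c * Fintype.card P : ℕ) := this
      have := (Nat.cast_le (α := ℝ)).mpr hcast2
      push_cast [Nat.cast_sub (by omega : 1 ≤ q)] at this
      rw [hcast] at this
      linarith
    have hr1 : ((unc L (insert p S)).card : ℝ) ≤ ((unc L S).card : ℝ) - c := by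
      have := (Nat.cast_le (α := ℝ)).mpr hstep1
      push_cast at this
      linarith
    set f : ℝ := 1 - (2 + (j:ℝ)) * ((q:ℝ) - 1) / N with hf
    have hfc : ((unc L S).card : ℝ) - c ≤ ((unc L S).card : ℝ) * f := by
      have h1 : ((unc L S).card : ℝ) * ((2 + (j:ℝ)) * ((q:ℝ) - 1)) / N ≤ c :=
        (div_le_iff₀ hN).mpr hr2
      have h2 : ((unc L S).card : ℝ) * f =
          ((unc L S).card : ℝ) -
            ((unc L S).card : ℝ) * ((2 + (j:ℝ)) * ((q:ℝ) - 1)) / N := by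
        rw [hf]; ring
      rw [h2]; linarith
    have hf0 : 0 ≤ f := by
      rw [hf]
      have hx : (2 + (j:ℝ)) * ((q:ℝ) - 1) ≤ N := by
        have hcN : (c : ℝ) * N ≤ ((unc L S).card : ℝ) * N := by
          apply mul_le_mul_of_nonneg_right _ hN.le
          exact_mod_cast hcleU
        have hU1 : (1 : ℝ) ≤ ((unc L S).card : ℝ) := by exact_mod_cast hUpos
        nlinarith
      have := div_le_one_of_le₀ hx hN.le
      linarith
    have hprod0 : (0:ℝ) ≤ (q : ℝ)^2 *
        ∏ k ∈ Finset.range j, (1 - (2 + (k : ℝ)) * ((q : ℝ) - 1) / N) := by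
      by_contra hneg
      push_neg at hneg
      have := hbound.trans hneg.le
      have h0 : (0:ℝ) ≤ ((unc L S).card : ℝ) := Nat.cast_nonneg _
      linarith
    calc ((unc L (insert p S)).card : ℝ)
        ≤ ((unc L S).card : ℝ) - c := hr1
      _ ≤ ((unc L S).card : ℝ) * f := hfc
      _ ≤ ((q : ℝ)^2 * ∏ k ∈ Finset.range j,
            (1 - (2 + (k : ℝ)) * ((q : ℝ) - 1) / N)) * f :=
          mul_le_mul_of_nonneg_right hbound hf0
      _ = (q : ℝ)^2 * ∏ k ∈ Finset.range (j+1),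
            (1 - (2 + (k : ℝ)) * ((q : ℝ) - 1) / N) := by
          rw [Finset.prod_range_succ, hf]
          ring

lemma final_of (q j : ℕ) (horder : order P L = q)
    (hprod : (q : ℝ)^2 * ∏ k ∈ Finset.range j,
        (1 - (2 + (k : ℝ)) * ((q : ℝ) - 1) / ((q : ℝ)^2 + (q : ℝ) + 1)) < 1)
    (hj : (j : ℝ) ≤ 2 * Real.sqrt (((q : ℝ) + 1) * Real.log ((q : ℝ) + 1))) :
    ∃ S : Finset P, IsSaturating L (↑S : Set P) ∧
      (S.card : ℝ) ≤ 2 * Real.sqrt (((q : ℝ) + 1) * Real.log ((q : ℝ) + 1)) + 2 := by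
  obtain ⟨S, h2, hle, hbr⟩ := greedy P L q horder j
  have hempty : unc L S = ∅ := by
    rcases hbr with h | ⟨-, hb⟩
    · exact h
    · have : ((unc L S).card : ℝ) < 1 := hb.trans_lt hprod
      have : (unc L S).card = 0 := by exact_mod_cast Nat.lt_one_iff.mp (by exact_mod_cast this)
      exact Finset.card_eq_zero.mp this
  refine ⟨S, saturating_of_unc_empty L hempty, ?_⟩
  have : (S.card : ℝ) ≤ 2 + j := by exact_mod_cast hle
  linarith

end SatAux2





namespace SatNum

lemma le_two_sqrt {a b : ℝ} (hb : 0 ≤ b) (h : b^2 ≤ 4*a) : b ≤ 2*Real.sqrt a := by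
  have ha : 0 ≤ a := by nlinarith
  have h2 : b/2 ≤ Real.sqrt a := (Real.le_sqrt (by linarith) ha).mpr (by nlinarith)
  linarith

lemma log_ge_pow {c : ℝ} (jj : ℕ) (h : (2:ℝ)^jj ≤ c) :
    0.6931471803 * (jj : ℝ) ≤ Real.log c := by
  have h2 : Real.log ((2:ℝ)^jj) ≤ Real.log c := Real.log_le_log (by positivity) h
  rw [Real.log_pow] at h2
  nlinarith [Real.log_two_gt_d9, Nat.cast_nonneg (α := ℝ) jj]

lemma one_le_log {c : ℝ} (h : 3 ≤ c) : 1 ≤ Real.log c := by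
  have he : Real.exp 1 ≤ c := by nlinarith [Real.exp_one_lt_d9]
  calc (1:ℝ) = Real.log (Real.exp 1) := (Real.log_exp 1).symm
    _ ≤ Real.log c := Real.log_le_log (Real.exp_pos 1) he

lemma log_le_four_sub {x : ℝ} (hx : 1 ≤ x) :
    Real.log x ≤ 4 * (Real.sqrt (Real.sqrt x) - 1) := by
  have h0 : (0:ℝ) ≤ x := by linarith
  have h1 : Real.log x = 4 * Real.log (Real.sqrt (Real.sqrt x)) := by
    rw [Real.log_sqrt (Real.sqrt_nonneg x), Real.log_sqrt h0]; ring
  have hpos : 0 < Real.sqrt (Real.sqrt x) := by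
    apply Real.sqrt_pos.mpr
    apply Real.sqrt_pos.mpr
    linarith
  have h2 := Real.log_le_sub_one_of_pos hpos
  linarith

lemma sum_two_add (j : ℕ) :
    (∑ k ∈ Finset.range j, (2 + (k:ℝ))) = (j:ℝ) * ((j:ℝ) + 3) / 2 := by
  induction j with
  | zero => simp
  | succ n ih => rw [Finset.sum_range_succ, ih]; push_cast; ring

lemma fourth_root_facts {Q : ℝ} (hQ : 32 ≤ Q) :
    ∃ u : ℝ, u^4 = Q ∧ 2.37 ≤ u := by
  refine ⟨Real.sqrt (Real.sqrt Q), ?_, ?_⟩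
  · have h1 : Real.sqrt (Real.sqrt Q) ^ 4 = (Real.sqrt (Real.sqrt Q) ^ 2) ^ 2 := by ring
    rw [h1, Real.sq_sqrt (Real.sqrt_nonneg Q), Real.sq_sqrt (by linarith)]
  · set u := Real.sqrt (Real.sqrt Q) with hu
    have hunn : 0 ≤ u := Real.sqrt_nonneg _
    have hu4 : u^4 = Q := by
      have h1 : u ^ 4 = (u ^ 2) ^ 2 := by ring
      rw [h1, hu, Real.sq_sqrt (Real.sqrt_nonneg Q), Real.sq_sqrt (by linarith)]
    by_contra hcon
    push_neg at hcon
    have h2 : u^2 < 2.37^2 := by nlinarith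
    have h4 : u^4 < 2.37^4 := by nlinarith
    rw [hu4] at h4
    norm_num at h4
    linarith

/-- for `Q ≥ 32`:  `4 (Q+2)² log Q ≤ (Q-1)² (Q+1)` -/
lemma key_iii {Q : ℝ} (hQ : 32 ≤ Q) :
    4 * (Q+2)^2 * Real.log Q ≤ (Q-1)^2 * (Q+1) := by
  obtain ⟨u, hu4, hu⟩ := fourth_root_facts hQ
  have hunn : (1:ℝ) ≤ u := by linarith
  have hlog : Real.log Q ≤ 4 * (u - 1) := by
    have h := log_le_four_sub (x := Q) (by linarith)
    have hsq : Real.sqrt (Real.sqrt Q) = u := by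
      have h1 : Q = u^4 := hu4.symm
      rw [h1]
      have h2 : Real.sqrt (u^4) = u^2 := by
        rw [show u^4 = (u^2)^2 by ring, Real.sqrt_sq (by positivity)]
      rw [h2, Real.sqrt_sq (by linarith)]
    rwa [hsq] at h
  -- (Q+2)² ≤ (34/31)² (Q-1)²
  have hq1 : Q + 2 ≤ (34/31) * (Q - 1) := by linarith
  have hq2 : (Q+2)^2 ≤ (1156/961) * (Q-1)^2 := by nlinarith
  -- 16 * (1156/961) * (u-1) ≤ Q + 1
  have hu2 : 5.6169 ≤ u^2 := by nlinarith
  have hq3 : (18496/961 : ℝ) * (u - 1) ≤ Q + 1 := by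
    have hQu : Q = u^4 := hu4.symm
    rw [hQu]
    nlinarith [sq_nonneg (u - 1.72), sq_nonneg u, hu2]
  have hlg0 : 0 ≤ u - 1 := by linarith
  calc 4 * (Q+2)^2 * Real.log Q ≤ 4 * (Q+2)^2 * (4*(u-1)) := by
        apply mul_le_mul_of_nonneg_left hlog (by positivity)
    _ = 16 * (u-1) * (Q+2)^2 := by ring
    _ ≤ 16 * (u-1) * ((1156/961) * (Q-1)^2) := by
        apply mul_le_mul_of_nonneg_left hq2 (by positivity)
    _ = (18496/961) * (u-1) * (Q-1)^2 := by ring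
    _ ≤ (Q+1) * (Q-1)^2 := by nlinarith [sq_nonneg (Q-1)]
    _ = (Q-1)^2 * (Q+1) := by ring

/-- for `Q ≥ 32`: `t = 2√((Q+1)log(Q+1)) ≤ Q` -/
lemma t_le_Q {Q : ℝ} (hQ : 32 ≤ Q) :
    2 * Real.sqrt ((Q+1) * Real.log (Q+1)) ≤ Q := by
  obtain ⟨v, hv4, hv⟩ := fourth_root_facts (Q := Q + 1) (by linarith)
  have hvnn : (1:ℝ) ≤ v := by linarith
  have hlog : Real.log (Q+1) ≤ 4 * (v - 1) := by
    have h := log_le_four_sub (x := Q+1) (by linarith)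
    have hsq : Real.sqrt (Real.sqrt (Q+1)) = v := by
      rw [show Q+1 = v^4 from hv4.symm,
        show v^4 = (v^2)^2 by ring, Real.sqrt_sq (by positivity),
        Real.sqrt_sq (by linarith)]
    rwa [hsq] at h
  have hv2 : 5.6169 ≤ v^2 := by nlinarith
  have hkey : 4 * ((Q+1) * Real.log (Q+1)) ≤ Q^2 := by
    have h1 : 4 * ((Q+1) * Real.log (Q+1)) ≤ 16 * (v^4) * (v-1) := by
      have := mul_le_mul_of_nonneg_left hlog (show (0:ℝ) ≤ Q+1 by linarith)
      rw [hv4] at *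
      nlinarith [this]
    have h2 : 16 * (v^4) * (v-1) ≤ (v^4-1)^2 := by
      nlinarith [sq_nonneg (v - 1.5), sq_nonneg v, sq_nonneg (v^2), hv2,
        sq_nonneg (v^2 - 3*v), mul_nonneg (sq_nonneg v) (sq_nonneg v)]
    have h3 : (v^4 - 1)^2 = Q^2 := by rw [hv4]; ring_nf
    linarith
  have hs : Real.sqrt ((Q+1) * Real.log (Q+1)) ≤ Q / 2 := by
    rw [show Q/2 = Real.sqrt ((Q/2)^2) from (Real.sqrt_sq (by linarith)).symm]
    apply Real.sqrt_le_sqrt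
    nlinarith
  linarith

end SatNum

namespace SatNum

set_option maxHeartbeats 2000000 in
lemma large_bound (q : ℕ) (hq : 32 ≤ q) :
    ∃ j : ℕ, (j:ℝ) ≤ 2 * Real.sqrt (((q:ℝ)+1) * Real.log ((q:ℝ)+1)) ∧
      (q:ℝ)^2 * ∏ k ∈ Finset.range j,
        (1 - (2+(k:ℝ))*((q:ℝ)-1)/((q:ℝ)^2+(q:ℝ)+1)) < 1 := by
  set Q : ℝ := (q:ℝ) with hQdef
  have hQ : 32 ≤ Q := by rw [hQdef]; exact_mod_cast hq
  set Lg : ℝ := Real.log (Q+1) with hLg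
  have hL1 : 1 ≤ Lg := one_le_log (by linarith)
  have hlogQ : 0 < Real.log Q := Real.log_pos (by linarith)
  have hX0 : (0:ℝ) ≤ (Q+1) * Lg := by nlinarith
  set t : ℝ := 2 * Real.sqrt ((Q+1) * Lg) with ht
  have ht0 : 0 ≤ t := by positivity
  have ht2 : t^2 = 4 * ((Q+1) * Lg) := by
    rw [ht, mul_pow, Real.sq_sqrt hX0]; ring
  have htQ : t ≤ Q := t_le_Q hQ
  have ht2' : 2 ≤ t := by nlinarith
  set j : ℕ := ⌊t⌋₊ with hj
  have hjle : (j:ℝ) ≤ t := Nat.floor_le ht0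
  have hjgt : t - 1 < (j:ℝ) := by
    have := Nat.lt_floor_add_one t
    linarith
  refine ⟨j, hjle, ?_⟩
  set N : ℝ := Q^2 + Q + 1 with hN
  have hN0 : (0:ℝ) < N := by positivity
  -- nonneg and exp bound on factors
  have hfac0 : ∀ k ∈ Finset.range j, (0:ℝ) ≤ 1 - (2+(k:ℝ))*(Q-1)/N := by
    intro k hk
    have hk' : (k:ℝ) ≤ (j:ℝ) - 1 := by
      have := Finset.mem_range.mp hk
      have : (k:ℝ) + 1 ≤ (j:ℝ) := by exact_mod_cast this
      linarith
    have h1 : (2+(k:ℝ))*(Q-1) ≤ (Q+1)*(Q-1) := by nlinarith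
    have h2 : (Q+1)*(Q-1) ≤ N := by nlinarith
    have h3 : (2+(k:ℝ))*(Q-1)/N ≤ 1 := by
      rw [div_le_one hN0]; linarith
    linarith
  have hfacle : ∀ k ∈ Finset.range j, (1 - (2+(k:ℝ))*(Q-1)/N) ≤
      Real.exp (-((2+(k:ℝ))*(Q-1)/N)) := by
    intro k _
    have := Real.add_one_le_exp (-((2+(k:ℝ))*(Q-1)/N))
    linarith
  have hprodle : (∏ k ∈ Finset.range j, (1 - (2+(k:ℝ))*(Q-1)/N)) ≤
      Real.exp (∑ k ∈ Finset.range j, -((2+(k:ℝ))*(Q-1)/N)) := by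
    rw [Real.exp_sum]
    exact Finset.prod_le_prod hfac0 hfacle
  have hsum : (∑ k ∈ Finset.range j, -((2+(k:ℝ))*(Q-1)/N)) =
      -((Q-1) * ((j:ℝ)*((j:ℝ)+3)) / (2*N)) := by
    have h1 : ∀ k:ℕ, -((2+(k:ℝ))*(Q-1)/N) = (2+(k:ℝ)) * (-(Q-1)/N) := fun k => by ring
    simp_rw [h1]
    rw [← Finset.sum_mul, sum_two_add]
    field_simp
  -- log gap
  have hgap : Real.log Q + 1/(Q+1) ≤ Lg := by
    have hd : Real.log (Q/(Q+1)) ≤ Q/(Q+1) - 1 :=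
      Real.log_le_sub_one_of_pos (by positivity)
    rw [Real.log_div (by linarith) (by linarith)] at hd
    have he : Q/(Q+1) - 1 = -(1/(Q+1)) := by field_simp; ring
    rw [he] at hd
    rw [hLg]
    linarith
  -- hE : 2(Q+2) log Q ≤ (Q-1) √((Q+1) log Q)
  have hY0 : (0:ℝ) ≤ (Q+1) * Real.log Q := by positivity
  have hE : 2*(Q+2)*Real.log Q ≤ (Q-1) * Real.sqrt ((Q+1) * Real.log Q) := by
    have hiii := key_iii hQ
    have hrw : (Q-1) * Real.sqrt ((Q+1) * Real.log Q)
        = Real.sqrt ((Q-1)^2 * ((Q+1) * Real.log Q)) := by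
      rw [Real.sqrt_mul (sq_nonneg (Q-1)), Real.sqrt_sq (by linarith)]
    rw [hrw]
    apply (Real.le_sqrt (by positivity) (by positivity)).mpr
    have hexp : (2*(Q+2)*Real.log Q)^2 = 4*(Q+2)^2*Real.log Q * Real.log Q := by ring
    rw [hexp]
    calc 4*(Q+2)^2*Real.log Q * Real.log Q ≤ ((Q-1)^2*(Q+1)) * Real.log Q :=
          mul_le_mul_of_nonneg_right hiii hlogQ.le
      _ = (Q-1)^2 * ((Q+1) * Real.log Q) := by ring
  have hT : 2 * Real.sqrt ((Q+1) * Real.log Q) ≤ t := by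
    rw [ht]
    have : (Q+1) * Real.log Q ≤ (Q+1) * Lg := by
      apply mul_le_mul_of_nonneg_left _ (by linarith)
      rw [hLg]
      exact Real.log_le_log (by linarith) (by linarith)
    have := Real.sqrt_le_sqrt this
    linarith
  -- KG : 4 N log Q < (Q-1) * j * (j+3)
  have hjj : (Q-1) * ((t-1)*(t+2)) ≤ (Q-1) * ((j:ℝ)*((j:ℝ)+3)) := by
    apply mul_le_mul_of_nonneg_left _ (by linarith)
    have h1 : 0 ≤ t - 1 := by linarith
    nlinarith
  have hpiece1 : 4*((Q+1)*(Q-1))*(Real.log Q + 1/(Q+1)) ≤ 4*((Q+1)*(Q-1))*Lg := by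
    apply mul_le_mul_of_nonneg_left hgap (by nlinarith)
  have hpiece1' : 4*((Q+1)*(Q-1))*(Real.log Q + 1/(Q+1))
      = 4*(Q^2-1)*Real.log Q + 4*(Q-1) := by
    field_simp
    ring
  have hpiece2 : 4*(Q+2)*Real.log Q ≤ (Q-1) * t := by
    have h1 : (Q-1) * (2 * Real.sqrt ((Q+1) * Real.log Q)) ≤ (Q-1) * t :=
      mul_le_mul_of_nonneg_left hT (by linarith)
    linarith [hE, h1]
  have hKG : 4 * N * Real.log Q < (Q-1) * ((j:ℝ)*((j:ℝ)+3)) := by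
    have hexpand : (Q-1)*((t-1)*(t+2)) = (Q-1)*(t^2 + t - 2) := by ring
    have h2 : (Q-1)*(t^2 + t - 2) = (Q-1)*(4*((Q+1)*Lg)) + (Q-1)*t - 2*(Q-1) := by
      rw [ht2]; ring
    have h3 : (Q-1)*(4*((Q+1)*Lg)) = 4*((Q+1)*(Q-1))*Lg := by ring
    have : 4 * N * Real.log Q < (Q-1)*((t-1)*(t+2)) := by
      rw [hexpand, h2, h3, hN]
      nlinarith [hpiece1, hpiece1', hpiece2]
    linarith [hjj]
  -- conclude
  have hsumgt : Real.log (Q^2) < (Q-1) * ((j:ℝ)*((j:ℝ)+3)) / (2*N) := by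
    rw [Real.log_pow]
    rw [lt_div_iff₀ (by positivity : (0:ℝ) < 2*N)]
    push_cast
    linarith [hKG]
  have hexplt : Real.exp (-((Q-1) * ((j:ℝ)*((j:ℝ)+3)) / (2*N))) < 1/Q^2 := by
    rw [show (1/Q^2 : ℝ) = Real.exp (-(Real.log (Q^2))) by
      rw [Real.exp_neg, Real.exp_log (by positivity), one_div]]
    apply Real.exp_lt_exp.mpr
    linarith
  calc Q^2 * ∏ k ∈ Finset.range j, (1 - (2+(k:ℝ))*(Q-1)/N)
      ≤ Q^2 * Real.exp (∑ k ∈ Finset.range j, -((2+(k:ℝ))*(Q-1)/N)) := by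
        apply mul_le_mul_of_nonneg_left hprodle (by positivity)
    _ = Q^2 * Real.exp (-((Q-1) * ((j:ℝ)*((j:ℝ)+3)) / (2*N))) := by rw [hsum]
    _ < Q^2 * (1/Q^2) := by
        apply mul_lt_mul_of_pos_left hexplt (by positivity)
    _ = 1 := by field_simp

end SatNum


namespace SatNum

lemma case_helper (q j jj : ℕ) (h2 : (2:ℝ)^jj ≤ (q:ℝ)+1)
    (hnum : ((j:ℝ))^2 ≤ 4*((q:ℝ)+1)*(0.6931471803*(jj:ℝ))) :
    (j:ℝ) ≤ 2*Real.sqrt (((q:ℝ)+1)*Real.log ((q:ℝ)+1)) := by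
  apply le_two_sqrt (Nat.cast_nonneg j)
  have hlog := log_ge_pow jj h2
  have hl0 : (0:ℝ) ≤ (q:ℝ)+1 := by positivity
  have hstep : ((q:ℝ)+1)*(0.6931471803*(jj:ℝ)) ≤ ((q:ℝ)+1)*Real.log ((q:ℝ)+1) :=
    mul_le_mul_of_nonneg_left hlog hl0
  nlinarith [hnum, hstep]

lemma case_helper2 (q j : ℕ) (h3 : (3:ℝ) ≤ (q:ℝ)+1)
    (hnum : ((j:ℝ))^2 ≤ 4*((q:ℝ)+1)) :
    (j:ℝ) ≤ 2*Real.sqrt (((q:ℝ)+1)*Real.log ((q:ℝ)+1)) := by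
  apply le_two_sqrt (Nat.cast_nonneg j)
  have hlog := one_le_log h3
  have hl0 : (0:ℝ) ≤ (q:ℝ)+1 := by positivity
  have hstep : ((q:ℝ)+1)*1 ≤ ((q:ℝ)+1)*Real.log ((q:ℝ)+1) :=
    mul_le_mul_of_nonneg_left hlog hl0
  nlinarith [hnum, hstep]

end SatNum

theorem smallest_saturating_set_bound (q : ℕ) (hq : 2 ≤ q)
    (P L : Type*) [Fintype P] [Fintype L] [Membership P L]
    [Configuration.ProjectivePlane P L]
    (horder : Configuration.ProjectivePlane.order P L = q) :
    ∃ S : Finset P, IsSaturating L (↑S : Set P) ∧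
      (S.card : ℝ) ≤ 2 * Real.sqrt ((q + 1) * Real.log (q + 1)) + 2 := by
  by_cases hbig : 32 ≤ q
  · obtain ⟨j, hj, hprod⟩ := SatNum.large_bound q hbig
    exact SatAux2.final_of P L q j horder hprod hj
  · push_neg at hbig
    interval_cases q
    · exact SatAux2.final_of P L 2 3 horder
        (by norm_num [Finset.prod_range_succ]) (SatNum.case_helper2 2 3 (by norm_num) (by norm_num))
    · exact SatAux2.final_of P L 3 4 horder
        (by norm_num [Finset.prod_range_succ]) (SatNum.case_helper 3 4 2 (by norm_num) (by norm_num))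
    · exact SatAux2.final_of P L 4 4 horder
        (by norm_num [Finset.prod_range_succ]) (SatNum.case_helper 4 4 2 (by norm_num) (by norm_num))
    · exact SatAux2.final_of P L 5 5 horder
        (by norm_num [Finset.prod_range_succ]) (SatNum.case_helper 5 5 2 (by norm_num) (by norm_num))
    · exact SatAux2.final_of P L 6 6 horder
        (by norm_num [Finset.prod_range_succ]) (SatNum.case_helper 6 6 2 (by norm_num) (by norm_num))
    · exact SatAux2.final_of P L 7 6 horder
        (by norm_num [Finset.prod_range_succ]) (SatNum.case_helper 7 6 3 (by norm_num) (by norm_num))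
    · exact SatAux2.final_of P L 8 7 horder
        (by norm_num [Finset.prod_range_succ]) (SatNum.case_helper 8 7 3 (by norm_num) (by norm_num))
    · exact SatAux2.final_of P L 9 7 horder
        (by norm_num [Finset.prod_range_succ]) (SatNum.case_helper 9 7 3 (by norm_num) (by norm_num))
    · exact SatAux2.final_of P L 10 8 horder
        (by norm_num [Finset.prod_range_succ]) (SatNum.case_helper 10 8 3 (by norm_num) (by norm_num))
    · exact SatAux2.final_of P L 11 9 horder
        (by norm_num [Finset.prod_range_succ]) (SatNum.case_helper 11 9 3 (by norm_num) (by norm_num))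
    · exact SatAux2.final_of P L 12 9 horder
        (by norm_num [Finset.prod_range_succ]) (SatNum.case_helper 12 9 3 (by norm_num) (by norm_num))
    · exact SatAux2.final_of P L 13 10 horder
        (by norm_num [Finset.prod_range_succ]) (SatNum.case_helper 13 10 3 (by norm_num) (by norm_num))
    · exact SatAux2.final_of P L 14 10 horder
        (by norm_num [Finset.prod_range_succ]) (SatNum.case_helper 14 10 3 (by norm_num) (by norm_num))
    · exact SatAux2.final_of P L 15 11 horder
        (by norm_num [Finset.prod_range_succ]) (SatNum.case_helper 15 11 4 (by norm_num) (by norm_num))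
    · exact SatAux2.final_of P L 16 11 horder
        (by norm_num [Finset.prod_range_succ]) (SatNum.case_helper 16 11 4 (by norm_num) (by norm_num))
    · exact SatAux2.final_of P L 17 12 horder
        (by norm_num [Finset.prod_range_succ]) (SatNum.case_helper 17 12 4 (by norm_num) (by norm_num))
    · exact SatAux2.final_of P L 18 12 horder
        (by norm_num [Finset.prod_range_succ]) (SatNum.case_helper 18 12 4 (by norm_num) (by norm_num))
    · exact SatAux2.final_of P L 19 13 horder
        (by norm_num [Finset.prod_range_succ]) (SatNum.case_helper 19 13 4 (by norm_num) (by norm_num))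
    · exact SatAux2.final_of P L 20 13 horder
        (by norm_num [Finset.prod_range_succ]) (SatNum.case_helper 20 13 4 (by norm_num) (by norm_num))
    · exact SatAux2.final_of P L 21 14 horder
        (by norm_num [Finset.prod_range_succ]) (SatNum.case_helper 21 14 4 (by norm_num) (by norm_num))
    · exact SatAux2.final_of P L 22 14 horder
        (by norm_num [Finset.prod_range_succ]) (SatNum.case_helper 22 14 4 (by norm_num) (by norm_num))
    · exact SatAux2.final_of P L 23 15 horder
        (by norm_num [Finset.prod_range_succ]) (SatNum.case_helper 23 15 4 (by norm_num) (by norm_num))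
    · exact SatAux2.final_of P L 24 15 horder
        (by norm_num [Finset.prod_range_succ]) (SatNum.case_helper 24 15 4 (by norm_num) (by norm_num))
    · exact SatAux2.final_of P L 25 15 horder
        (by norm_num [Finset.prod_range_succ]) (SatNum.case_helper 25 15 4 (by norm_num) (by norm_num))
    · exact SatAux2.final_of P L 26 16 horder
        (by norm_num [Finset.prod_range_succ]) (SatNum.case_helper 26 16 4 (by norm_num) (by norm_num))
    · exact SatAux2.final_of P L 27 16 horder
        (by norm_num [Finset.prod_range_succ]) (SatNum.case_helper 27 16 4 (by norm_num) (by norm_num))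
    · exact SatAux2.final_of P L 28 17 horder
        (by norm_num [Finset.prod_range_succ]) (SatNum.case_helper 28 17 4 (by norm_num) (by norm_num))
    · exact SatAux2.final_of P L 29 17 horder
        (by norm_num [Finset.prod_range_succ]) (SatNum.case_helper 29 17 4 (by norm_num) (by norm_num))
    · exact SatAux2.final_of P L 30 18 horder
        (by norm_num [Finset.prod_range_succ]) (SatNum.case_helper 30 18 4 (by norm_num) (by norm_num))
    · exact SatAux2.final_of P L 31 18 horder
        (by norm_num [Finset.prod_range_succ]) (SatNum.case_helper 31 18 4 (by norm_num) (by norm_num))
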